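/- (Finite Model Property for systems) Let t, s₁, …, s_κ be Heyting terms in m variables. If there exist a Heyting algebra K and a tuple b̄ ∈ K^m with t(b̄) = ⊤ and s_k(b̄) ≠ ⊤ for every 1 ≤ k ≤ κ, then there exist a finite Heyting algebra K′ and a tuple b̄′ ∈ K′^m with t(b̄′) = ⊤ and s_k(b̄′) ≠ ⊤ for every 1 ≤ k ≤ κ. -/

import Mathlib

/-- Formal Heyting terms in `n` variables. -/
inductive HeytingTerm (n : ℕ) : Type
  | var : Fin n → HeytingTerm n
  | bot : HeytingTerm n
  | top : HeytingTerm n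
  | inf : HeytingTerm n → HeytingTerm n → HeytingTerm n
  | sup : HeytingTerm n → HeytingTerm n → HeytingTerm n
  | himp : HeytingTerm n → HeytingTerm n → HeytingTerm n

namespace HeytingTerm

/-- Evaluation of a Heyting term in a Heyting algebra. -/
def eval {n : ℕ} {H : Type*} [HeytingAlgebra H] (v : Fin n → H) : HeytingTerm n → H
  | var i => v i
  | bot => ⊥
  | top => ⊤
  | inf a b => a.eval v ⊓ b.eval v
  | sup a b => a.eval v ⊔ b.eval v
  | himp a b => a.eval v ⇨ b.eval v

/-- The degree of a Heyting term: the maximal number of nested occurrences of `⇨`. -/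
def degree {n : ℕ} : HeytingTerm n → ℕ
  | var _ => 0
  | bot => 0
  | top => 0
  | inf a b => max a.degree b.degree
  | sup a b => max a.degree b.degree
  | himp a b => max a.degree b.degree + 1

end HeytingTerm

namespace FMPaux

open HeytingTerm

/-- A `Type 0` copy of `Fin n`, carrying no instances. -/
def FinCopy (n : ℕ) : Type := Fin n

/-- The list of subterms of a Heyting term. -/
def subterms {n : ℕ} : HeytingTerm n → List (HeytingTerm n)
  | .var i => [.var i]
  | .bot => [.bot]
  | .top => [.top]
  | .inf a b => .inf a b :: (subterms a ++ subterms b)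
  | .sup a b => .sup a b :: (subterms a ++ subterms b)
  | .himp a b => .himp a b :: (subterms a ++ subterms b)

lemma self_mem_subterms {n : ℕ} (u : HeytingTerm n) : u ∈ subterms u := by
  cases u <;> simp [subterms]

/-- Evaluation commutes with maps preserving all Heyting operations. -/
lemma eval_map {m : ℕ} {A B : Type*} [HeytingAlgebra A] [HeytingAlgebra B] (f : A → B)
    (hsup : ∀ x y, f (x ⊔ y) = f x ⊔ f y) (hinf : ∀ x y, f (x ⊓ y) = f x ⊓ f y)
    (hhimp : ∀ x y, f (x ⇨ y) = f x ⇨ f y) (hbot : f ⊥ = ⊥) (htop : f ⊤ = ⊤)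
    (v : Fin m → A) (u : HeytingTerm m) : f (u.eval v) = u.eval (f ∘ v) := by
  induction u <;> simp_all [HeytingTerm.eval]

/-- Core lemma: evaluation in a Heyting algebra `A` that embeds into `K` as a bounded
sublattice (not necessarily preserving `⇨`!) agrees with evaluation in `K`, provided the
values of all subterms (in particular, of all `⇨`-subterms) lie in the image of `A`. -/
lemma map_eval {m : ℕ} {A K : Type*} [HeytingAlgebra K] [HeytingAlgebra A] (f : A → K)
    (hle : ∀ x y : A, x ≤ y ↔ f x ≤ f y)
    (hinf : ∀ x y : A, f (x ⊓ y) = f x ⊓ f y)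
    (hsup : ∀ x y : A, f (x ⊔ y) = f x ⊔ f y)
    (hbot : f ⊥ = ⊥) (htop : f ⊤ = ⊤)
    (b : Fin m → K) (b' : Fin m → A) (hb : ∀ i, f (b' i) = b i)
    (u : HeytingTerm m) (hu : ∀ w ∈ subterms u, ∃ x : A, f x = w.eval b) :
    f (u.eval b') = u.eval b := by
  induction u with
  | var i => exact hb i
  | bot => exact hbot
  | top => exact htop
  | inf a c iha ihc =>
      have ha : ∀ w ∈ subterms a, ∃ x : A, f x = w.eval b :=
        fun w hw => hu w (by simp [subterms, hw])
      have hc : ∀ w ∈ subterms c, ∃ x : A, f x = w.eval b :=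
        fun w hw => hu w (by simp [subterms, hw])
      simp [HeytingTerm.eval, hinf, iha ha, ihc hc]
  | sup a c iha ihc =>
      have ha : ∀ w ∈ subterms a, ∃ x : A, f x = w.eval b :=
        fun w hw => hu w (by simp [subterms, hw])
      have hc : ∀ w ∈ subterms c, ∃ x : A, f x = w.eval b :=
        fun w hw => hu w (by simp [subterms, hw])
      simp [HeytingTerm.eval, hsup, iha ha, ihc hc]
  | himp a c iha ihc =>
      have ha : ∀ w ∈ subterms a, ∃ x : A, f x = w.eval b :=
        fun w hw => hu w (by simp [subterms, hw])
      have hc : ∀ w ∈ subterms c, ∃ x : A, f x = w.eval b :=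
        fun w hw => hu w (by simp [subterms, hw])
      have iha := iha ha
      have ihc := ihc hc
      obtain ⟨E, hE⟩ := hu _ (self_mem_subterms (.himp a c))
      rw [show (HeytingTerm.himp a c).eval b = a.eval b ⇨ c.eval b from rfl] at hE
      set X := a.eval b' with hX
      set C := c.eval b' with hC
      show f (X ⇨ C) = a.eval b ⇨ c.eval b
      have key : f ((X ⇨ C) ⊓ X) ≤ f C := (hle _ _).mp himp_inf_le
      have h1 : X ⇨ C ≤ E := by
        rw [hle, hE, le_himp_iff]
        calc f (X ⇨ C) ⊓ a.eval b = f ((X ⇨ C) ⊓ X) := by rw [hinf, iha]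
          _ ≤ f C := key
          _ = c.eval b := ihc
      have h2 : E ≤ X ⇨ C := by
        rw [le_himp_iff, hle, hinf, hE, iha, ihc]
        exact himp_inf_le
      rw [le_antisymm h1 h2, hE]

end FMPaux

/-- Finite Model Property for systems of equations and negated equations. -/
theorem finite_model_property {m κ : ℕ} (t : HeytingTerm m) (s : Fin κ → HeytingTerm m)
    (K : Type*) [HeytingAlgebra K] (b : Fin m → K)
    (ht : t.eval b = ⊤) (hs : ∀ k, (s k).eval b ≠ ⊤) :
    ∃ (K' : Type) (inst : HeytingAlgebra K'),
      letI := inst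
      Finite K' ∧ ∃ b' : Fin m → K', t.eval b' = ⊤ ∧ ∀ k, (s k).eval b' ≠ ⊤ := by
  classical
  open FMPaux in
  -- the finite generating set: ⊥, ⊤, the variables, and all subterm values
  set S : Set K :=
    {⊥, ⊤} ∪ Set.range b ∪
      ((fun u : HeytingTerm m => u.eval b) ''
        ({u | u ∈ subterms t} ∪ ⋃ k, {u | u ∈ subterms (s k)})) with hS
  have hSfin : S.Finite := by
    apply Set.Finite.union
    · exact ((Set.finite_singleton (⊤ : K)).insert ⊥).union (Set.finite_range b)
    · exact Set.Finite.image _ ((List.finite_toSet _).union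
        (Set.finite_iUnion fun k => List.finite_toSet _))
  set D : Set K := latticeClosure S with hD
  have hDfin : D.Finite := hSfin.latticeClosure
  have hsubS : S ⊆ D := subset_latticeClosure
  have hbotm : (⊥ : K) ∈ D := hsubS (by simp [hS])
  have htopm : (⊤ : K) ∈ D := hsubS (by simp [hS])
  have hbm : ∀ i, b i ∈ D := fun i => hsubS (by simp [hS])
  have hsupc : SupClosed D := isSublattice_latticeClosure.1
  have hinfc : InfClosed D := isSublattice_latticeClosure.2
  -- the finite distributive bounded lattice structure on D
  haveI hfin : Finite ↥D := hDfin.to_subtype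
  letI : Fintype ↥D := Fintype.ofFinite _
  letI : Max ↥D := ⟨fun x y => ⟨(x : K) ⊔ y, hsupc x.2 y.2⟩⟩
  letI : Min ↥D := ⟨fun x y => ⟨(x : K) ⊓ y, hinfc x.2 y.2⟩⟩
  letI : DistribLattice ↥D :=
    Subtype.coe_injective.distribLattice _ Iff.rfl Iff.rfl (fun _ _ => rfl) (fun _ _ => rfl)
  letI : BoundedOrder ↥D :=
    { top := ⟨⊤, htopm⟩
      le_top := fun a => show (a : K) ≤ ⊤ from le_top
      bot := ⟨⊥, hbotm⟩
      bot_le := fun a => show (⊥ : K) ≤ (a : K) from bot_le }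
  letI : CompleteDistribLattice ↥D := Fintype.toCompleteDistribLattice ↥D
  set b' : Fin m → ↥D := fun i => ⟨b i, hbm i⟩ with hb'
  -- evaluation in D agrees with evaluation in K, for t and each s k
  have hcoe : ∀ u : HeytingTerm m,
      (∀ w ∈ subterms u, ∃ x : ↥D, (x : K) = w.eval b) →
      ((u.eval b' : ↥D) : K) = u.eval b := by
    intro u hu
    exact map_eval (fun x : ↥D => (x : K)) (fun _ _ => Iff.rfl) (fun _ _ => rfl)
      (fun _ _ => rfl) rfl rfl b b' (fun _ => rfl) u hu
  have hmemt : ∀ w ∈ subterms t, ∃ x : ↥D, (x : K) = w.eval b := by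
    intro w hw
    refine ⟨⟨w.eval b, hsubS ?_⟩, rfl⟩
    exact Or.inr ⟨w, Or.inl hw, rfl⟩
  have hmems : ∀ k, ∀ w ∈ subterms (s k), ∃ x : ↥D, (x : K) = w.eval b := by
    intro k w hw
    refine ⟨⟨w.eval b, hsubS ?_⟩, rfl⟩
    exact Or.inr ⟨w, Or.inr (Set.mem_iUnion.2 ⟨k, hw⟩), rfl⟩
  have hct : ((t.eval b' : ↥D) : K) = t.eval b := hcoe t hmemt
  have hcs : ∀ k, (((s k).eval b' : ↥D) : K) = (s k).eval b := fun k => hcoe (s k) (hmems k)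
  -- results in ↥D
  have htD : t.eval b' = ⊤ := by
    apply Subtype.ext
    rw [show ((t.eval b' : ↥D) : K) = _ from hct, ht]
    rfl
  have hsD : ∀ k, (s k).eval b' ≠ ⊤ := by
    intro k h
    exact hs k (by rw [← hcs k, h]; rfl)
  -- shrink to `Type 0`
  obtain ⟨nn, ⟨e⟩⟩ : ∃ nn, Nonempty (↥D ≃ Fin nn) := ⟨_, ⟨Fintype.equivFin ↥D⟩⟩
  set A := FinCopy nn with hA
  have ee : A ≃ ↥D := (Equiv.refl (Fin nn)).trans e.symm
  letI : LE A := ⟨fun x y => ee x ≤ ee y⟩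
  letI : LT A := ⟨fun x y => ee x < ee y⟩
  letI : Max A := ⟨fun x y => ee.symm (ee x ⊔ ee y)⟩
  letI : Min A := ⟨fun x y => ee.symm (ee x ⊓ ee y)⟩
  letI : Top A := ⟨ee.symm ⊤⟩
  letI : Bot A := ⟨ee.symm ⊥⟩
  letI : HImp A := ⟨fun x y => ee.symm (ee x ⇨ ee y)⟩
  letI : Compl A := ⟨fun x => ee.symm (ee x)ᶜ⟩
  letI instA : HeytingAlgebra A :=
    ee.injective.heytingAlgebra ee Iff.rfl Iff.rfl (fun _ _ => ee.apply_symm_apply _)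
      (fun _ _ => ee.apply_symm_apply _) (ee.apply_symm_apply _) (ee.apply_symm_apply _)
      (fun _ => ee.apply_symm_apply _) (fun _ _ => ee.apply_symm_apply _)
  haveI hfinA : Finite A := Finite.of_equiv _ ee.symm
  have eesup : ∀ x y : A, ee (x ⊔ y) = ee x ⊔ ee y := fun _ _ => ee.apply_symm_apply _
  have eeinf : ∀ x y : A, ee (x ⊓ y) = ee x ⊓ ee y := fun _ _ => ee.apply_symm_apply _
  have eehimp : ∀ x y : A, ee (x ⇨ y) = ee x ⇨ ee y := fun _ _ => ee.apply_symm_apply _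
  have eebot : ee ⊥ = ⊥ := ee.apply_symm_apply _
  have eetop : ee ⊤ = ⊤ := ee.apply_symm_apply _
  set b'' : Fin m → A := fun i => ee.symm (b' i) with hb''
  have hcomp : (ee ∘ b'') = b' := by
    funext i
    exact ee.apply_symm_apply _
  refine ⟨A, instA, hfinA, b'', ?_, ?_⟩
  · apply ee.injective
    rw [eval_map ee eesup eeinf eehimp eebot eetop, hcomp, htD, eetop]
  · intro k h
    apply hsD k
    have h2 := congrArg ee h
    rw [eval_map ee eesup eeinf eehimp eebot eetop, hcomp, eetop] at h2
    exact h2
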